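/- Let $R$ be a commutative ring, $m \geq 1$, and let $\lambda_1,\dots,\lambda_m \in R$. Let $A$ be the $m \times m$ companion-type matrix whose $(i,i+1)$ entries equal $1$ for $i=1,\dots,m-1$, whose last row is $(c_1, c_2, \dots, c_m)$ where the $c_j$ are determined by $\tau^m - \sum_{j=1}^m c_j \tau^{j-1} = \prod_{i=1}^m (\tau - \lambda_i)$, and all other entries zero. Let $T$ be the lower unitriangular $m\times m$ matrix with entries $T_{j,k} = h_{j-k}(\lambda_1,\dots,\lambda_k)$ for $j \geq k$ (where $h_r$ denotes the complete homogeneous symmetric polynomial of degree $r$), and let $J$ be the upper bidiagonal matrix with diagonal entries $\lambda_1,\dots,\lambda_m$ and superdiagonal entries all equal to $1$. Then $A T = T J$. -/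

import Mathlib

open Finset Polynomial

/-- Complete homogeneous symmetric polynomial `h_r(x_1,…,x_k)`. -/
def hpoly {R : Type*} [CommSemiring R] (r : ℕ) {k : ℕ} (x : Fin k → R) : R :=
  ∑ α ∈ Finset.Nat.antidiagonalTuple k r, ∏ i, x i ^ α i

/-- Elementary symmetric polynomial `e_r(x_1,…,x_k)`. -/
def epoly {R : Type*} [CommSemiring R] (r : ℕ) {k : ℕ} (x : Fin k → R) : R :=
  ∑ s ∈ Finset.powersetCard r (Finset.univ : Finset (Fin k)), ∏ i ∈ s, x i

/-- Lower unitriangular transformation matrix `T` with `T j k = h_{j-k}(λ_1,…,λ_k)`. -/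
def Tmat {R : Type*} [CommSemiring R] {m : ℕ} (lam : Fin m → R) : Matrix (Fin m) (Fin m) R :=
  Matrix.of fun j k : Fin m =>
    if (k:ℕ) ≤ (j:ℕ) then
      hpoly ((j:ℕ) - (k:ℕ)) (fun i : Fin ((k:ℕ)+1) => lam (Fin.castLE k.isLt i))
    else 0

/-- Sylvester companion matrix with last row `c`. -/
def Amat {R : Type*} [CommSemiring R] {m : ℕ} (c : Fin m → R) : Matrix (Fin m) (Fin m) R :=
  Matrix.of fun i j : Fin m =>
    if (j:ℕ) = (i:ℕ) + 1 then 1 else if (i:ℕ) = m - 1 then c j else 0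

/-- Upper bidiagonal matrix with diagonal `λ_i` and superdiagonal `1`. -/
def Jmat {R : Type*} [CommSemiring R] {m : ℕ} (lam : Fin m → R) : Matrix (Fin m) (Fin m) R :=
  Matrix.of fun i j : Fin m =>
    if i = j then lam i else if (j:ℕ) = (i:ℕ) + 1 then 1 else 0

lemma hpoly_zero {R : Type*} [CommSemiring R] {k : ℕ} (x : Fin k → R) : hpoly 0 x = 1 := by
  simp [hpoly, Finset.Nat.antidiagonalTuple_zero_right]

lemma hpoly_zero_vars {R : Type*} [CommSemiring R] (n : ℕ) (x : Fin 0 → R) :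
    hpoly (n+1) x = 0 := by
  have : Finset.Nat.antidiagonalTuple 0 (n+1) = ∅ := by
    ext α
    simp [Finset.Nat.mem_antidiagonalTuple]
  simp [hpoly, this]

lemma hpoly_split {R : Type*} [CommSemiring R] (n k : ℕ) (x : Fin (k+1) → R) :
    hpoly n x = ∑ p ∈ Finset.HasAntidiagonal.antidiagonal n,
      x (Fin.last k) ^ p.1 * hpoly p.2 (x ∘ Fin.castSucc) := by
  unfold hpoly
  simp_rw [Finset.mul_sum]
  rw [Finset.sum_sigma']
  refine Finset.sum_nbij' (i := fun α => ⟨(α (Fin.last k), ∑ i : Fin k, α (Fin.castSucc i)),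
      fun i => α (Fin.castSucc i)⟩) (j := fun q => Fin.snoc q.2 q.1.1) ?_ ?_ ?_ ?_ ?_
  · intro α hα
    rw [Finset.Nat.mem_antidiagonalTuple] at hα
    simp only [Finset.mem_sigma, Finset.HasAntidiagonal.mem_antidiagonal, Finset.Nat.mem_antidiagonalTuple]
    refine ⟨?_, trivial⟩
    rw [← hα, Fin.sum_univ_castSucc]
    ring
  · intro q hq
    rw [Finset.mem_sigma, Finset.HasAntidiagonal.mem_antidiagonal, Finset.Nat.mem_antidiagonalTuple] at hq
    rw [Finset.Nat.mem_antidiagonalTuple, Fin.sum_univ_castSucc]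
    simp only [Fin.snoc_castSucc, Fin.snoc_last]
    rw [hq.2, add_comm, hq.1]
  · intro α hα
    simp only
    funext i
    refine Fin.lastCases ?_ ?_ i
    · simp
    · intro j; simp
  · intro q hq
    simp only [Fin.snoc_last, Fin.snoc_castSucc]
    rw [Finset.mem_sigma, Finset.HasAntidiagonal.mem_antidiagonal, Finset.Nat.mem_antidiagonalTuple] at hq
    ext <;> simp [hq.2]
  · intro α hα
    simp only
    rw [Fin.prod_univ_castSucc]
    rw [mul_comm]
    rfl

lemma hpoly_rec {R : Type*} [CommSemiring R] (n k : ℕ) (x : Fin (k+1) → R) :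
    hpoly (n+1) x = x (Fin.last k) * hpoly n x + hpoly (n+1) (x ∘ Fin.castSucc) := by
  rw [hpoly_split (n+1) k x, Finset.Nat.sum_antidiagonal_succ, hpoly_split n k x,
    Finset.mul_sum]
  simp only [pow_zero, one_mul, pow_succ]
  rw [add_comm]
  congr 1
  refine Finset.sum_congr rfl fun p _ => by ring

lemma hpoly_one_var {R : Type*} [CommSemiring R] (n : ℕ) (x : Fin 1 → R) :
    hpoly n x = x 0 ^ n := by
  induction n with
  | zero => simp [hpoly_zero]
  | succ n ih =>
    rw [hpoly_rec, hpoly_zero_vars, ih, add_zero, pow_succ]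
    rw [show Fin.last 0 = 0 from rfl]
    ring

/-- `Hfun k x j = h_{j-k}(x)` for `j ≥ k`, else `0`. -/
def Hfun {R : Type*} [CommSemiring R] (k : ℕ) (x : Fin (k+1) → R) (j : ℕ) : R :=
  if k ≤ j then hpoly (j - k) x else 0

lemma Hfun_step {R : Type*} [CommSemiring R] (k : ℕ) (x : Fin (k+2) → R) (j : ℕ) :
    Hfun (k+1) x (j+1)
      = x (Fin.last (k+1)) * Hfun (k+1) x j + Hfun k (x ∘ Fin.castSucc) j := by
  unfold Hfun
  rcases lt_trichotomy j k with h | h | h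
  · rw [if_neg (by omega), if_neg (by omega), if_neg (by omega)]; ring
  · subst h
    rw [if_pos (by omega), if_neg (by omega), if_pos (by omega)]
    simp [hpoly_zero]
  · rw [if_pos (by omega), if_pos (by omega), if_pos (by omega)]
    have h1 : j - (k+1) + 1 = j + 1 - (k+1) := by omega
    have h2 : j - (k+1) = j - k - 1 := by omega
    rw [← h1, hpoly_rec]
    congr 2
    omega

lemma Hfun_step0 {R : Type*} [CommSemiring R] (x : Fin 1 → R) (j : ℕ) :
    Hfun 0 x (j+1) = x (Fin.last 0) * Hfun 0 x j := by
  unfold Hfun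
  simp only [Nat.zero_le, if_pos, Nat.sub_zero]
  rw [hpoly_one_var, hpoly_one_var, pow_succ]
  rw [show Fin.last 0 = 0 from rfl]
  ring

noncomputable def Bpoly {R : Type*} [CommRing R] (k : ℕ) (x : Fin (k+1) → R) : Polynomial R :=
  ∏ i, (Polynomial.X - Polynomial.C (x i))

lemma Bpoly_natDegree_le {R : Type*} [CommRing R] (k : ℕ) (x : Fin (k+1) → R) :
    (Bpoly k x).natDegree ≤ k + 1 := by
  refine le_trans (Polynomial.natDegree_prod_le _ _) ?_
  refine le_trans (Finset.sum_le_sum fun i _ => Polynomial.natDegree_X_sub_C_le (x i)) ?_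
  simp

lemma keyB {R : Type*} [CommRing R] (k : ℕ) (x : Fin (k+1) → R) (s : ℕ) :
    ∑ a ∈ Finset.range (k+2), (Bpoly k x).coeff a * Hfun k x (a + s) = 0 := by
  induction k generalizing s with
  | zero =>
    have hB : Bpoly 0 x = Polynomial.X - Polynomial.C (x 0) := by
      simp [Bpoly, Fin.prod_univ_one]
    have h0 : Hfun 0 x (0 + s) = x 0 ^ s := by
      simp [Hfun, hpoly_one_var]
    have h1 : Hfun 0 x (1 + s) = x 0 ^ (1 + s) := by
      simp [Hfun, hpoly_one_var]
    rw [Finset.sum_range_succ, Finset.sum_range_one, hB, h0, h1]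
    simp [pow_add]
  | succ k ih =>
    set y := x (Fin.last (k+1)) with hy
    set xi : Fin (k+1) → R := x ∘ Fin.castSucc with hxi
    have hB : Bpoly (k+1) x = Bpoly k xi * (Polynomial.X - Polynomial.C y) := by
      rw [Bpoly, Fin.prod_univ_castSucc]; rfl
    have hcoeff : ∀ a, (Bpoly (k+1) x).coeff a
        = (Bpoly k xi * Polynomial.X).coeff a - (Bpoly k xi).coeff a * y := by
      intro a
      rw [hB, mul_sub, Polynomial.coeff_sub, mul_comm (Bpoly k xi) (Polynomial.C y),
        Polynomial.coeff_C_mul]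
      ring
    simp_rw [hcoeff, sub_mul, Finset.sum_sub_distrib]
    have e1 : ∑ a ∈ Finset.range (k+3), (Bpoly k xi * Polynomial.X).coeff a * Hfun (k+1) x (a+s)
        = ∑ a ∈ Finset.range (k+2), (Bpoly k xi).coeff a * Hfun (k+1) x (a+1+s) := by
      rw [Finset.sum_range_succ' _ (k+2)]
      simp only [Polynomial.coeff_mul_X, Polynomial.coeff_mul_X_zero, zero_mul, add_zero]
    have e2 : ∑ a ∈ Finset.range (k+3), (Bpoly k xi).coeff a * y * Hfun (k+1) x (a+s)
        = ∑ a ∈ Finset.range (k+2), (Bpoly k xi).coeff a * y * Hfun (k+1) x (a+s) := by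
      rw [Finset.sum_range_succ]
      rw [Polynomial.coeff_eq_zero_of_natDegree_lt (lt_of_le_of_lt (Bpoly_natDegree_le k xi) (by omega))]
      simp
    rw [e1, e2, ← Finset.sum_sub_distrib]
    rw [← ih xi s]
    refine Finset.sum_congr rfl fun a _ => ?_
    have := Hfun_step k x (a + s)
    rw [show a+1+s = a+s+1 by omega, this, ← hy, ← hxi]
    ring

/-- The shifted pairing vanishes for any multiple of `Bpoly`. -/
lemma keyQ {R : Type*} [CommRing R] (k : ℕ) (x : Fin (k+1) → R) (Q : Polynomial R) (s : ℕ) :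
    (Bpoly k x * Q).sum (fun a t => t * Hfun k x (a + s)) = 0 := by
  induction Q using Polynomial.induction_on' generalizing s with
  | add p q hp hq =>
    rw [mul_add, Polynomial.sum_add_index _ _ (fun a t => t * Hfun k x (a + s)) (fun i => zero_mul _)
      (fun a b₁ b₂ => add_mul _ _ _), hp s, hq s, add_zero]
  | monomial n t =>
    rw [Polynomial.sum_over_range' (f := fun a t => t * Hfun k x (a + s)) _ (fun i => zero_mul _) (n + (k+2)) ?deg]
    case deg =>
      refine lt_of_le_of_lt (Polynomial.natDegree_mul_le) ?_
      have := Polynomial.natDegree_monomial_le t (m := n)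
      have := Bpoly_natDegree_le k x
      omega
    rw [Finset.sum_range_add]
    have z1 : ∀ a ∈ Finset.range n,
        (Bpoly k x * Polynomial.monomial n t).coeff a * Hfun k x (a + s) = 0 := by
      intro a ha
      rw [Finset.mem_range] at ha
      rw [← Polynomial.C_mul_X_pow_eq_monomial, ← mul_assoc, Polynomial.coeff_mul_X_pow',
        if_neg (by omega), zero_mul]
    rw [Finset.sum_congr rfl z1, Finset.sum_const_zero, zero_add]
    have z2 : ∀ i ∈ Finset.range (k+2),
        (Bpoly k x * Polynomial.monomial n t).coeff (n + i) * Hfun k x (n + i + s)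
        = (Bpoly k x).coeff i * Hfun k x (i + (n + s)) * t := by
      intro i _
      rw [← Polynomial.C_mul_X_pow_eq_monomial, ← mul_assoc, Polynomial.coeff_mul_X_pow',
        if_pos (by omega), Polynomial.coeff_mul_C, show n + i - n = i by omega,
        show n + i + s = i + (n + s) by omega]
      ring
    rw [Finset.sum_congr rfl z2, ← Finset.sum_mul, keyB k x (n + s), zero_mul]

lemma rhs_eval {R : Type*} [CommRing R] {m : ℕ} (lam : Fin m → R) (i k : Fin m) :
    (∑ j, Tmat lam i j * Jmat lam j k)
      = Hfun (k:ℕ) (fun t => lam (Fin.castLE k.isLt t)) ((i:ℕ)+1) := by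
  obtain ⟨K, hKm⟩ := k
  rcases K with _ | K'
  · -- column 0
    have hsum : ∀ j : Fin m, Tmat lam i j * Jmat lam j ⟨0, hKm⟩
        = Tmat lam i j * (if j = ⟨0, hKm⟩ then lam ⟨0, hKm⟩ else 0) := by
      intro j
      congr 1
      show (if j = ⟨0, hKm⟩ then lam j else if (0:ℕ) = (j:ℕ)+1 then 1 else 0) = _
      by_cases h : j = ⟨0, hKm⟩
      · rw [if_pos h, if_pos h, h]
      · rw [if_neg h, if_neg h, if_neg (by omega)]
    rw [Finset.sum_congr rfl fun j _ => hsum j, Finset.sum_eq_single (⟨0, hKm⟩ : Fin m)]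
    · rw [if_pos rfl]
      have hT : Tmat lam i ⟨0, hKm⟩
          = Hfun 0 (fun t => lam (Fin.castLE hKm t)) (i:ℕ) := rfl
      rw [hT, Hfun_step0 (fun t => lam (Fin.castLE hKm t)) (i:ℕ)]
      have h2 : lam (Fin.castLE hKm (Fin.last 0)) = lam ⟨0, hKm⟩ := rfl
      rw [h2]
      ring
    · intro b _ hb; rw [if_neg hb, mul_zero]
    · intro h; exact absurd (Finset.mem_univ _) h
  · -- column K'+1
    have hJ : ∀ j : Fin m, Jmat lam j ⟨K'+1, hKm⟩
        = (if j = ⟨K'+1, hKm⟩ then lam ⟨K'+1, hKm⟩ else 0)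
          + (if (j:ℕ) = K' then 1 else 0) := by
      intro j
      show (if j = ⟨K'+1, hKm⟩ then lam j
          else if K'+1 = (j:ℕ)+1 then 1 else 0) = _
      by_cases h : j = ⟨K'+1, hKm⟩
      · rw [if_pos h, if_pos h, h, if_neg (by simp), add_zero]
      · rw [if_neg h, if_neg h, zero_add]
        by_cases h2 : (j:ℕ) = K'
        · rw [if_pos (by omega), if_pos h2]
        · rw [if_neg (by omega), if_neg h2]
    simp_rw [hJ, mul_add, Finset.sum_add_distrib]
    have hK'm : K' < m := by omega
    have s1 : ∑ j, Tmat lam i j * (if j = ⟨K'+1, hKm⟩ then lam ⟨K'+1, hKm⟩ else 0)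
        = Tmat lam i ⟨K'+1, hKm⟩ * lam ⟨K'+1, hKm⟩ := by
      rw [Finset.sum_eq_single (⟨K'+1, hKm⟩ : Fin m)]
      · rw [if_pos rfl]
      · intro b _ hb; rw [if_neg hb, mul_zero]
      · intro h; exact absurd (Finset.mem_univ _) h
    have s2 : ∑ j, Tmat lam i j * (if (j:ℕ) = K' then (1:R) else 0)
        = Tmat lam i ⟨K', hK'm⟩ := by
      rw [Finset.sum_eq_single (⟨K', hK'm⟩ : Fin m)]
      · rw [if_pos rfl, mul_one]
      · intro b _ hb; rw [if_neg (fun hh => hb (Fin.ext hh)), mul_zero]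
      · intro h; exact absurd (Finset.mem_univ _) h
    rw [s1, s2]
    have hT1 : Tmat lam i ⟨K'+1, hKm⟩
        = Hfun (K'+1) (fun t => lam (Fin.castLE hKm t)) (i:ℕ) := rfl
    have hT2 : Tmat lam i ⟨K', hK'm⟩
        = Hfun K' ((fun t : Fin (K'+2) => lam (Fin.castLE hKm t)) ∘ Fin.castSucc) (i:ℕ) := rfl
    rw [hT1, hT2, Hfun_step K' (fun t => lam (Fin.castLE hKm t)) (i:ℕ)]
    have h2 : lam (Fin.castLE hKm (Fin.last (K'+1))) = lam ⟨K'+1, hKm⟩ := rfl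
    rw [h2]
    ring

theorem companion_schur {R : Type*} [CommRing R] (m : ℕ) (hm : 1 ≤ m)
    (lam c : Fin m → R)
    (hc : (Polynomial.X ^ m - ∑ j : Fin m, Polynomial.C (c j) * Polynomial.X ^ (j:ℕ))
        = ∏ i : Fin m, (Polynomial.X - Polynomial.C (lam i))) :
    Amat c * Tmat lam = Tmat lam * Jmat lam := by
  ext i k
  rw [Matrix.mul_apply, Matrix.mul_apply, rhs_eval lam i k]
  have hKm : (k:ℕ) < m := k.isLt
  set K := (k:ℕ) with hKdef
  set xk : Fin (K+1) → R := fun t => lam (Fin.castLE k.isLt t) with hxk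
  have hT : ∀ j : Fin m, Tmat lam j k = Hfun K xk (j:ℕ) := fun j => rfl
  by_cases hi : (i:ℕ) = m - 1
  · -- last row
    have hAc : ∀ j : Fin m, Amat c i j = c j := by
      intro j
      show (if (j:ℕ) = (i:ℕ)+1 then 1 else if (i:ℕ) = m-1 then c j else 0) = c j
      rw [if_neg (by have := j.isLt; omega), if_pos hi]
    simp_rw [hAc, hT]
    have him : (i:ℕ) + 1 = m := by omega
    rw [him]
    set P : Polynomial R := ∏ i : Fin m, (Polynomial.X - Polynomial.C (lam i)) with hPdef
    have hdeg : P.natDegree ≤ m := by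
      refine le_trans (Polynomial.natDegree_prod_le _ _) ?_
      refine le_trans (Finset.sum_le_sum fun t _ => Polynomial.natDegree_X_sub_C_le (lam t)) ?_
      simp
    set g : ℕ → Polynomial R :=
      fun n => if h : n < m then Polynomial.X - Polynomial.C (lam ⟨n, h⟩) else 1 with hg
    have hgval : ∀ j : Fin m, g (j:ℕ) = Polynomial.X - Polynomial.C (lam j) := by
      intro j; rw [hg]; simp only [j.isLt, dif_pos, Fin.eta]
    have hP1 : P = ∏ n ∈ Finset.range m, g n := by
      rw [hPdef, ← Fin.prod_univ_eq_prod_range]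
      exact Finset.prod_congr rfl fun j _ => (hgval j).symm
    have hsplit : ∏ n ∈ Finset.range m, g n
        = (∏ n ∈ Finset.range (K+1), g n) * ∏ t ∈ Finset.range (m - (K+1)), g ((K+1)+t) := by
      have hmk : K+1 + (m-(K+1)) = m := by omega
      conv_lhs => rw [← hmk, Finset.prod_range_add]
    have hB : ∏ n ∈ Finset.range (K+1), g n = Bpoly K xk := by
      rw [Bpoly, ← Fin.prod_univ_eq_prod_range]
      refine Finset.prod_congr rfl fun t _ => ?_
      have htm : (t:ℕ) < m := by have := t.isLt; omega
      exact (dif_pos htm).trans rfl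
    have hPfact : P = Bpoly K xk * ∏ t ∈ Finset.range (m - (K+1)), g ((K+1)+t) := by
      rw [hP1, hsplit, hB]
    have h0 : ∑ a ∈ Finset.range (m+1), P.coeff a * Hfun K xk a = 0 := by
      have hq := keyQ K xk (∏ t ∈ Finset.range (m - (K+1)), g ((K+1)+t)) 0
      rw [← hPfact] at hq
      rw [Polynomial.sum_over_range' (p := P) (f := fun a t => t * Hfun K xk (a + 0))
        (fun t => zero_mul _) (m+1) (Nat.lt_succ_of_le hdeg)] at hq
      simpa using hq
    have hco : ∀ a : ℕ, P.coeff a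
        = (if a = m then 1 else 0) - (if h : a < m then c ⟨a, h⟩ else 0) := by
      intro a
      rw [← hc, Polynomial.coeff_sub, Polynomial.coeff_X_pow]
      congr 1
      rw [Polynomial.finset_sum_coeff]
      simp_rw [Polynomial.coeff_C_mul, Polynomial.coeff_X_pow]
      by_cases h : a < m
      · rw [dif_pos h, Finset.sum_eq_single (⟨a, h⟩ : Fin m)]
        · rw [if_pos rfl, mul_one]
        · intro b _ hb
          rw [if_neg (fun hh => hb (Fin.ext hh.symm)), mul_zero]
        · intro hh; exact absurd (Finset.mem_univ _) hh
      · rw [dif_neg h]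
        refine Finset.sum_eq_zero fun b _ => ?_
        rw [if_neg (by have := b.isLt; omega), mul_zero]
    simp_rw [hco, sub_mul, Finset.sum_sub_distrib] at h0
    have e1 : ∑ a ∈ Finset.range (m+1), (if a = m then (1:R) else 0) * Hfun K xk a
        = Hfun K xk m := by
      rw [Finset.sum_eq_single m]
      · rw [if_pos rfl, one_mul]
      · intro b _ hb; rw [if_neg hb, zero_mul]
      · intro hh; exact absurd (Finset.self_mem_range_succ m) hh
    have e2 : ∑ a ∈ Finset.range (m+1), (if h : a < m then c ⟨a, h⟩ else 0) * Hfun K xk a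
        = ∑ j : Fin m, c j * Hfun K xk (j:ℕ) := by
      rw [Finset.sum_range_succ, dif_neg (lt_irrefl m), zero_mul, add_zero]
      rw [← Fin.sum_univ_eq_sum_range
        (fun a => (if h : a < m then c ⟨a, h⟩ else 0) * Hfun K xk a) m]
      refine Finset.sum_congr rfl fun j _ => ?_
      rw [dif_pos j.isLt, Fin.eta]
    rw [e1, e2] at h0
    linear_combination -h0
  · -- other rows
    have hA : ∀ j : Fin m, Amat c i j = if (j:ℕ) = (i:ℕ)+1 then 1 else 0 := by
      intro j
      show (if (j:ℕ) = (i:ℕ)+1 then 1 else if (i:ℕ) = m-1 then c j else 0) = _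
      by_cases h : (j:ℕ) = (i:ℕ)+1
      · rw [if_pos h, if_pos h]
      · rw [if_neg h, if_neg h, if_neg hi]
    simp_rw [hA]
    have hi1 : (i:ℕ)+1 < m := by have := i.isLt; omega
    rw [Finset.sum_eq_single (⟨(i:ℕ)+1, hi1⟩ : Fin m)]
    · rw [if_pos rfl, one_mul, hT ⟨(i:ℕ)+1, hi1⟩]
    · intro b _ hb
      rw [if_neg (fun hh => hb (Fin.ext hh)), zero_mul]
    · intro hh; exact absurd (Finset.mem_univ _) hh
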